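/- If q > 3, then multiplication in the Hall system H over the finite field F of order q is not commutative (there exist a, b ∈ H with a·b ≠ b·a), not associative (there exist a, b, c ∈ H with (a·b)·c ≠ a·(b·c)), and not left distributive over addition (there exist a, b, c ∈ H with a·(b + c) ≠ a·b + a·c). -/

import Mathlib

open Polynomial

/-- The Hall system multiplication on `F × F`, with defining polynomial `x^2 - r*x - s`. -/
def hallMul {F : Type*} [Field F] [DecidableEq F] (r s : F) (a b : F × F) : F × F :=
  if b.2 = 0 then (a.1 * b.1, a.2 * b.1)
  else (a.1 * b.1 - a.2 * b.2⁻¹ * (b.1 ^ 2 - r * b.1 - s),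
        a.1 * b.2 - a.2 * b.1 + a.2 * r)

/-- If `q > 3`, the Hall system multiplication is not commutative, not associative,
and not left distributive over addition. -/
theorem hall_not_comm_not_assoc_not_left_distrib {F : Type*} [Field F] [Fintype F] [DecidableEq F]
    (q : ℕ) (hq : Fintype.card F = q) (hq3 : 3 < q) (r s : F)
    (hirr : Irreducible (X ^ 2 - C r * X - C s : F[X])) :
    (∃ a b : F × F, hallMul r s a b ≠ hallMul r s b a) ∧
    (∃ a b c : F × F, hallMul r s (hallMul r s a b) c ≠ hallMul r s a (hallMul r s b c)) ∧
    (∃ a b c : F × F, hallMul r s a (b + c) ≠ hallMul r s a b + hallMul r s a c) := by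
  have hs : s ≠ 0 := by
    intro h
    subst h
    have heq : (X ^ 2 - C r * X - C (0:F)) = X * (X - C r) := by
      simp; ring
    rw [heq] at hirr
    rcases hirr.2 rfl with h | h
    · exact Polynomial.not_isUnit_X h
    · exact Polynomial.not_isUnit_X_sub_C r h
  obtain ⟨x, hx⟩ : ∃ x : F, x ∉ ({0, r} : Finset F) := by
    by_contra hc
    push_neg at hc
    have hsub : (Finset.univ : Finset F) ⊆ {0, r} := fun z _ => hc z
    have h1 := Finset.card_le_card hsub
    have h2 : ({0, r} : Finset F).card ≤ 2 :=
      le_trans (Finset.card_insert_le _ _) (by simp)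
    rw [Finset.card_univ, hq] at h1
    omega
  simp only [Finset.mem_insert, Finset.mem_singleton, not_or] at hx
  obtain ⟨hx0, hxr⟩ := hx
  obtain ⟨y, hy⟩ : ∃ y : F, y ∉ ({0, 1, -1} : Finset F) := by
    by_contra hc
    push_neg at hc
    have hsub : (Finset.univ : Finset F) ⊆ {0, 1, -1} := fun z _ => hc z
    have h1 := Finset.card_le_card hsub
    have h2 : ({0, 1, -1} : Finset F).card ≤ 3 :=
      le_trans (Finset.card_insert_le _ _)
        (le_trans (Nat.succ_le_succ (Finset.card_insert_le _ _)) (by simp))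
    rw [Finset.card_univ, hq] at h1
    omega
  simp only [Finset.mem_insert, Finset.mem_singleton, not_or] at hy
  obtain ⟨hy0, hy1, hym1⟩ := hy
  refine ⟨⟨(0, 1), (x, 1), ?_⟩, ⟨(0, 1), (0, 1), (y, 0), ?_⟩, ⟨(0, 1), (0, 1), (x, 0), ?_⟩⟩
  · intro h
    have h1 := congrArg Prod.fst h
    simp [hallMul] at h1
    -- h1 should reduce to something like -(x^2 - r*x - s) = s
    have hx' : x * (x - r) = 0 := by linear_combination h1
    rcases mul_eq_zero.1 hx' with h | h
    · exact hx0 h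
    · exact hxr (sub_eq_zero.1 h)
  · intro h
    have h1 := congrArg Prod.fst h
    simp [hallMul, hy0] at h1
    field_simp at h1
    have hy2 : y ^ 2 = 1 := by
      have := mul_left_cancel₀ hs (by linear_combination s * h1 : s * (y * y) = s * 1)
      linear_combination this
    rcases sq_eq_one_iff.mp hy2 with h | h
    · exact hy1 h
    · exact hym1 h
  · intro h
    have h1 := congrArg Prod.fst h
    simp [hallMul, hx0] at h1
    have hx' : x * (x - r) = 0 := by linear_combination h1
    rcases mul_eq_zero.1 hx' with h | h
    · exact hx0 h
    · exact hxr (sub_eq_zero.1 h)
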